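/- First-order unification is decidable and computes most general unifiers: for any two terms M₁ and M₂, either they have no unifier, or there exists a unifier σ such that σ(M₁) = σ(M₂) and for every unifier σ' of M₁ and M₂ there exists a substitution σ* with σ' = σ* ∘ σ. -/

import Mathlib

/-- First-order terms: variables or constructor applications. -/
inductive Tm where
  | var : ℕ → Tm
  | app : ℕ → List Tm → Tm

/-- The occurs relation `x ∈ M`. -/
inductive Occurs : ℕ → Tm → Prop where
  | var : ∀ {x}, Occurs x (.var x)
  | app : ∀ {x c Ms M}, M ∈ Ms → Occurs x M → Occurs x (.app c Ms)

/-- The non-occurs relation `x ∉ M`. -/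
inductive NotOccurs : ℕ → Tm → Prop where
  | var : ∀ {x y}, x ≠ y → NotOccurs x (.var y)
  | app : ∀ {x c Ms}, (∀ M ∈ Ms, NotOccurs x M) → NotOccurs x (.app c Ms)

/-- Strict substructure relation `M ⊏ M'`. -/
inductive Substr : Tm → Tm → Prop where
  | base : ∀ {M c Ms}, M ∈ Ms → Substr M (.app c Ms)
  | ind : ∀ {M Mi c Ms}, Mi ∈ Ms → Substr M Mi → Substr M (.app c Ms)

/-- Homomorphic extension of a substitution `σ : ℕ → Tm` to terms. -/
def applySub (σ : ℕ → Tm) : Tm → Tm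
  | .var y => σ y
  | .app c Ms => .app c (Ms.attach.map (fun ⟨m, _⟩ => applySub σ m))
  decreasing_by have := List.sizeOf_lt_of_mem ‹_›; simp_all; omega

/-- The single substitution `[M/x]`. -/
def single (M : Tm) (x : ℕ) : ℕ → Tm := fun y => if y = x then M else .var y

/-- Capture-free substitution `[M/x]M'`. -/
def subst (M : Tm) (x : ℕ) (M' : Tm) : Tm := applySub (single M x) M'

theorem tmInd (P : Tm → Prop) (hv : ∀ x, P (Tm.var x))
    (ha : ∀ c Ms, (∀ M ∈ Ms, P M) → P (Tm.app c Ms)) : ∀ M, P M := by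
  have key : ∀ n M, sizeOf M ≤ n → P M := by
    intro n
    induction n with
    | zero => intro M h; cases M <;> simp at h
    | succ n ih =>
      intro M h
      cases M with
      | var x => exact hv x
      | app c Ms =>
        refine ha c Ms (fun M hM => ih M ?_)
        have := List.sizeOf_lt_of_mem hM
        simp at h; omega
  exact fun M => key (sizeOf M) M le_rfl

@[simp] theorem applySub_var (σ : ℕ → Tm) (x : ℕ) : applySub σ (.var x) = σ x := by
  simp [applySub]

@[simp] theorem applySub_app (σ : ℕ → Tm) (c : ℕ) (Ms : List Tm) :
    applySub σ (.app c Ms) = .app c (Ms.map (applySub σ)) := by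
  rw [applySub]
  congr 1
  simp

def sz : Tm → ℕ
  | .var _ => 1
  | .app _ Ms => 1 + (Ms.attach.map (fun ⟨m, _⟩ => sz m)).sum
  decreasing_by have := List.sizeOf_lt_of_mem ‹_›; simp_all; omega

@[simp] theorem sz_var (x : ℕ) : sz (.var x) = 1 := by simp [sz]

@[simp] theorem sz_app (c : ℕ) (Ms : List Tm) :
    sz (.app c Ms) = 1 + (Ms.map sz).sum := by
  rw [sz]; congr 1; simp

def vars : Tm → Finset ℕ
  | .var x => {x}
  | .app _ Ms => (Ms.attach.map (fun ⟨m, _⟩ => vars m)).foldr (· ∪ ·) ∅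
  decreasing_by have := List.sizeOf_lt_of_mem ‹_›; simp_all; omega

@[simp] theorem vars_var (x : ℕ) : vars (.var x) = {x} := by simp [vars]

theorem mem_foldr_union {x : ℕ} : ∀ (l : List (Finset ℕ)),
    x ∈ l.foldr (· ∪ ·) ∅ ↔ ∃ s ∈ l, x ∈ s := by
  intro l
  induction l with
  | nil => simp
  | cons a l ih => simp [ih]

@[simp] theorem mem_vars_app {x c Ms} :
    x ∈ vars (Tm.app c Ms) ↔ ∃ M ∈ Ms, x ∈ vars M := by
  rw [vars, mem_foldr_union]
  constructor
  · rintro ⟨s, hs, hx⟩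
    simp only [List.mem_map] at hs
    obtain ⟨⟨m, hm⟩, _, rfl⟩ := hs
    exact ⟨m, hm, hx⟩
  · rintro ⟨M, hM, hx⟩
    exact ⟨vars M, by simp; exact ⟨M, hM, rfl⟩, hx⟩

theorem applySub_congr {σ τ : ℕ → Tm} :
    ∀ M : Tm, (∀ x ∈ vars M, σ x = τ x) → applySub σ M = applySub τ M := by
  refine tmInd _ (by simp) ?_
  intro c Ms ih h
  simp only [applySub_app, Tm.app.injEq, true_and]
  exact List.map_congr_left fun M hM => ih M hM (fun x hx => h x (mem_vars_app.2 ⟨M, hM, hx⟩))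

theorem applySub_id : ∀ M : Tm, applySub Tm.var M = M := by
  refine tmInd _ (by simp) ?_
  intro c Ms ih
  simp only [applySub_app, Tm.app.injEq, true_and]
  exact List.map_congr_left (fun M hM => ih M hM) |>.trans (List.map_id _)

theorem applySub_comp (τ σ : ℕ → Tm) :
    ∀ M : Tm, applySub τ (applySub σ M) = applySub (fun y => applySub τ (σ y)) M := by
  refine tmInd _ (by simp) ?_
  intro c Ms ih
  simp only [applySub_app, List.map_map, Tm.app.injEq, true_and]
  exact List.map_congr_left fun M hM => ih M hM

theorem sz_le_applySub {σ : ℕ → Tm} {x : ℕ} :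
    ∀ M : Tm, x ∈ vars M → sz (σ x) ≤ sz (applySub σ M) := by
  refine tmInd _ (by simp +contextual) ?_
  intro c Ms ih hx
  obtain ⟨M, hM, hxM⟩ := mem_vars_app.1 hx
  have h1 := ih M hM hxM
  have h2 : sz (applySub σ M) ≤ ((Ms.map (applySub σ)).map sz).sum :=
    List.single_le_sum (fun _ _ => Nat.zero_le _) _ (by
      simp only [List.mem_map]; exact ⟨applySub σ M, ⟨M, hM, rfl⟩, rfl⟩)
  simp only [applySub_app, sz_app]
  omega

theorem occurs_no_unify {σ : ℕ → Tm} {x c Ms} (hx : x ∈ vars (Tm.app c Ms)) :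
    σ x ≠ applySub σ (Tm.app c Ms) := by
  obtain ⟨M, hM, hxM⟩ := mem_vars_app.1 hx
  intro h
  have h1 := sz_le_applySub (σ := σ) M hxM
  have h2 : sz (applySub σ M) ≤ ((Ms.map (applySub σ)).map sz).sum :=
    List.single_le_sum (fun _ _ => Nat.zero_le _) _ (by
      simp only [List.mem_map]; exact ⟨applySub σ M, ⟨M, hM, rfl⟩, rfl⟩)
  have : sz (σ x) = sz (applySub σ (Tm.app c Ms)) := by rw [h]
  simp only [applySub_app, sz_app] at this
  omega

theorem subst_of_not_mem {N : Tm} {x : ℕ} {M : Tm} (h : x ∉ vars M) :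
    subst N x M = M := by
  unfold subst
  rw [applySub_congr M (τ := Tm.var) fun y hy => by
    have : y ≠ x := fun e => h (e ▸ hy)
    simp [single, this]]
  exact applySub_id M

theorem vars_subst_subset {N : Tm} {x : ℕ} :
    ∀ M : Tm, vars (subst N x M) ⊆ (vars M \ {x}) ∪ vars N := by
  refine tmInd _ ?_ ?_
  · intro y z hz
    simp only [subst, applySub_var, single] at hz
    by_cases h : y = x
    · simp only [h, if_pos rfl] at hz
      exact Finset.mem_union_right _ hz
    · simp only [if_neg h, vars_var, Finset.mem_singleton] at hz
      subst hz
      exact Finset.mem_union_left _ (by simp [h])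
  · intro c Ms ih z hz
    simp only [subst, applySub_app] at hz
    obtain ⟨M', hM', hzM'⟩ := mem_vars_app.1 hz
    obtain ⟨M, hM, rfl⟩ := List.mem_map.1 hM'
    have := ih M hM hzM'
    simp only [Finset.mem_union, Finset.mem_sdiff, Finset.mem_singleton] at this ⊢
    rcases this with ⟨h1, h2⟩ | h1
    · exact Or.inl ⟨mem_vars_app.2 ⟨M, hM, h1⟩, h2⟩
    · exact Or.inr h1

theorem applySub_subst_of_unif {σ' : ℕ → Tm} {N : Tm} {x : ℕ}
    (h : σ' x = applySub σ' N) (M : Tm) :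
    applySub σ' (subst N x M) = applySub σ' M := by
  unfold subst
  rw [applySub_comp]
  exact applySub_congr M fun y _ => by
    simp only [single]
    by_cases hy : y = x <;> simp [hy, h.symm]

-- equation systems
def Unifies (σ : ℕ → Tm) (E : List (Tm × Tm)) : Prop :=
  ∀ p ∈ E, applySub σ p.1 = applySub σ p.2

def szE (E : List (Tm × Tm)) : ℕ := (E.map (fun p => sz p.1 + sz p.2)).sum

def varsE (E : List (Tm × Tm)) : Finset ℕ :=
  E.foldr (fun p acc => vars p.1 ∪ vars p.2 ∪ acc) ∅

@[simp] theorem mem_varsE {x : ℕ} : ∀ {E : List (Tm × Tm)},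
    x ∈ varsE E ↔ ∃ p ∈ E, x ∈ vars p.1 ∨ x ∈ vars p.2 := by
  intro E
  induction E with
  | nil => simp [varsE]
  | cons p E ih =>
    show x ∈ vars p.1 ∪ vars p.2 ∪ varsE E ↔ _
    simp only [Finset.mem_union, ih, List.mem_cons]
    constructor
    · rintro ((h | h) | ⟨q, hq, h⟩)
      · exact ⟨p, Or.inl rfl, Or.inl h⟩
      · exact ⟨p, Or.inl rfl, Or.inr h⟩
      · exact ⟨q, Or.inr hq, h⟩
    · rintro ⟨q, (rfl | hq), h⟩
      · exact Or.inl h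
      · exact Or.inr ⟨q, hq, h⟩

theorem unifies_app_iff {σ : ℕ → Tm} {c : ℕ} :
    ∀ {Ms Ns : List Tm}, Ms.length = Ns.length →
    (applySub σ (Tm.app c Ms) = applySub σ (Tm.app c Ns) ↔ Unifies σ (Ms.zip Ns)) := by
  intro Ms
  induction Ms with
  | nil => intro Ns h; cases Ns <;> simp_all [Unifies]
  | cons M Ms ih =>
    intro Ns h
    cases Ns with
    | nil => simp at h
    | cons N Ns =>
      simp only [List.length_cons, Nat.add_right_cancel_iff] at h
      have := ih (Ns := Ns) h
      simp only [applySub_app, List.map_cons, Tm.app.injEq, true_and, List.cons.injEq,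
        List.zip_cons_cons, Unifies, List.mem_cons] at *
      constructor
      · rintro ⟨h1, h2⟩
        rintro p (rfl | hp)
        · exact h1
        · exact this.1 h2 p hp
      · intro h2
        exact ⟨h2 (M, N) (Or.inl rfl), this.2 fun p hp => h2 p (Or.inr hp)⟩

theorem szE_zip_le : ∀ (Ms Ns : List Tm),
    szE (Ms.zip Ns) ≤ (Ms.map sz).sum + (Ns.map sz).sum := by
  intro Ms
  induction Ms with
  | nil => simp [szE]
  | cons M Ms ih =>
    intro Ns
    cases Ns with
    | nil => simp [szE]
    | cons N Ns =>
      have := ih Ns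
      simp only [List.zip_cons_cons, szE, List.map_cons, List.sum_cons] at *
      omega

def IsMGU (σ : ℕ → Tm) (E : List (Tm × Tm)) : Prop :=
  Unifies σ E ∧ ∀ σ' : ℕ → Tm, Unifies σ' E →
    ∃ σs : ℕ → Tm, ∀ y, σ' y = applySub σs (σ y)

theorem transfer {E₁ E₂ : List (Tm × Tm)} (h : ∀ σ, Unifies σ E₁ ↔ Unifies σ E₂)
    (H : (¬ ∃ σ, Unifies σ E₁) ∨ ∃ σ, IsMGU σ E₁) :
    (¬ ∃ σ, Unifies σ E₂) ∨ ∃ σ, IsMGU σ E₂ := by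
  rcases H with H | ⟨σ, h1, h2⟩
  · exact Or.inl fun ⟨σ, hσ⟩ => H ⟨σ, (h σ).2 hσ⟩
  · exact Or.inr ⟨σ, (h σ).1 h1, fun σ' hσ' => h2 σ' ((h σ').2 hσ')⟩

theorem unif_subst_system {σ' : ℕ → Tm} {N : Tm} {x : ℕ} {E' : List (Tm × Tm)}
    (hhead : σ' x = applySub σ' N) (h : Unifies σ' E') :
    Unifies σ' (E'.map fun p => (subst N x p.1, subst N x p.2)) := by
  intro p hp
  obtain ⟨q, hq, rfl⟩ := List.mem_map.1 hp
  simp only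
  rw [applySub_subst_of_unif hhead, applySub_subst_of_unif hhead]
  exact h q hq

theorem elim_case {x : ℕ} {N : Tm} {E' : List (Tm × Tm)} (hx : x ∉ vars N)
    (IH : (¬ ∃ σ, Unifies σ (E'.map fun p => (subst N x p.1, subst N x p.2))) ∨
      ∃ σ₀, IsMGU σ₀ (E'.map fun p => (subst N x p.1, subst N x p.2))) :
    (¬ ∃ σ, Unifies σ ((Tm.var x, N) :: E')) ∨ ∃ σ, IsMGU σ ((Tm.var x, N) :: E') := by
  set E'' := E'.map fun p => (subst N x p.1, subst N x p.2) with hE''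
  rcases IH with H | ⟨σ₀, h1, h2⟩
  · left
    rintro ⟨σ', hσ'⟩
    have hhead : σ' x = applySub σ' N := by
      have := hσ' (Tm.var x, N) (List.mem_cons_self); simpa using this
    exact H ⟨σ', unif_subst_system hhead fun p hp => hσ' p (List.mem_cons_of_mem _ hp)⟩
  · right
    refine ⟨fun y => applySub σ₀ (single N x y), ?_, ?_⟩
    · intro p hp
      rcases List.mem_cons.1 hp with rfl | hp
      · have hR : applySub (fun y => applySub σ₀ (single N x y)) N = applySub σ₀ N := by
          rw [← applySub_comp]
          show applySub σ₀ (subst N x N) = _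
          rw [subst_of_not_mem hx]
        show applySub _ (Tm.var x) = applySub _ N
        rw [applySub_var, hR]
        simp [single]
      · have e1 : applySub (fun y => applySub σ₀ (single N x y)) p.1
            = applySub σ₀ (subst N x p.1) := (applySub_comp σ₀ (single N x) p.1).symm
        have e2 : applySub (fun y => applySub σ₀ (single N x y)) p.2
            = applySub σ₀ (subst N x p.2) := (applySub_comp σ₀ (single N x) p.2).symm
        show applySub _ p.1 = applySub _ p.2
        rw [e1, e2]
        exact h1 (subst N x p.1, subst N x p.2) (List.mem_map.2 ⟨p, hp, rfl⟩)
    · intro σ' hσ'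
      have hhead : σ' x = applySub σ' N := by
        have := hσ' (Tm.var x, N) (List.mem_cons_self); simpa using this
      obtain ⟨σs, hσs⟩ := h2 σ'
        (unif_subst_system hhead fun p hp => hσ' p (List.mem_cons_of_mem _ hp))
      refine ⟨σs, fun y => ?_⟩
      rw [applySub_comp]
      have key : applySub (fun z => applySub σs (σ₀ z)) (single N x y)
          = applySub σ' (single N x y) :=
        applySub_congr _ fun z _ => (hσs z).symm
      rw [key]
      by_cases hy : y = x
      · subst hy; simp only [single, if_pos rfl]; exact hhead
      · simp [single, hy]

theorem sz_pos : ∀ M : Tm, 0 < sz M := by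
  intro M; cases M <;> simp

@[simp] theorem szE_cons (p : Tm × Tm) (E : List (Tm × Tm)) :
    szE (p :: E) = sz p.1 + sz p.2 + szE E := by simp [szE]

theorem szE_append (A B : List (Tm × Tm)) : szE (A ++ B) = szE A + szE B := by
  simp [szE]

theorem varsE_tail_subset (p : Tm × Tm) (E : List (Tm × Tm)) :
    varsE E ⊆ varsE (p :: E) := by
  intro z hz
  obtain ⟨q, hq, h⟩ := mem_varsE.1 hz
  exact mem_varsE.2 ⟨q, List.mem_cons_of_mem _ hq, h⟩

theorem card_elim_lt {x : ℕ} {N : Tm} {E' : List (Tm × Tm)} {P : Tm × Tm}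
    (hx : x ∉ vars N) (hN : vars N ⊆ varsE (P :: E')) (hxe : x ∈ varsE (P :: E')) :
    (varsE (E'.map fun p => (subst N x p.1, subst N x p.2))).card
      < (varsE (P :: E')).card := by
  have hsub : varsE (E'.map fun p => (subst N x p.1, subst N x p.2))
      ⊆ (varsE (P :: E')).erase x := by
    intro z hz
    obtain ⟨p, hp, h⟩ := mem_varsE.1 hz
    obtain ⟨q, hq, rfl⟩ := List.mem_map.1 hp
    have key : ∀ A : Tm, z ∈ vars (subst N x A) → z ∈ vars A ∨ z ∈ vars N := by
      intro A hA
      have := vars_subst_subset A hA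
      simp only [Finset.mem_union, Finset.mem_sdiff] at this
      tauto
    have hzx : z ≠ x := by
      intro e
      rcases h with h | h <;>
      · have h2 := vars_subst_subset _ h
        simp only [Finset.mem_union, Finset.mem_sdiff, Finset.mem_singleton] at h2
        rcases h2 with ⟨_, h'⟩ | h'
        · exact h' e
        · exact hx (e ▸ h')
    refine Finset.mem_erase.2 ⟨hzx, ?_⟩
    rcases h with h | h
    · rcases key q.1 h with h' | h'
      · exact mem_varsE.2 ⟨q, List.mem_cons_of_mem _ hq, Or.inl h'⟩
      · exact hN h'
    · rcases key q.2 h with h' | h'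
      · exact mem_varsE.2 ⟨q, List.mem_cons_of_mem _ hq, Or.inr h'⟩
      · exact hN h'
  exact lt_of_le_of_lt (Finset.card_le_card hsub) (Finset.card_erase_lt_of_mem hxe)

theorem varsE_zip_subset {c c' : ℕ} {Ms Ns : List Tm} {E' : List (Tm × Tm)} :
    varsE (Ms.zip Ns ++ E') ⊆ varsE ((Tm.app c Ms, Tm.app c' Ns) :: E') := by
  intro z hz
  obtain ⟨p, hp, h⟩ := mem_varsE.1 hz
  rcases List.mem_append.1 hp with hp | hp
  · have hm := List.of_mem_zip hp
    refine mem_varsE.2 ⟨(Tm.app c Ms, Tm.app c' Ns), List.mem_cons_self, ?_⟩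
    rcases h with h | h
    · exact Or.inl (mem_vars_app.2 ⟨p.1, hm.1, h⟩)
    · exact Or.inr (mem_vars_app.2 ⟨p.2, hm.2, h⟩)
  · exact mem_varsE.2 ⟨p, List.mem_cons_of_mem _ hp, h⟩

theorem solve (E : List (Tm × Tm)) :
    (¬ ∃ σ, Unifies σ E) ∨ ∃ σ, IsMGU σ E := by
  match E with
  | [] =>
    right
    exact ⟨Tm.var, fun p hp => absurd hp List.not_mem_nil,
      fun σ' _ => ⟨σ', fun y => (applySub_var σ' y).symm⟩⟩
  | (Tm.var x, N) :: E' =>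
    by_cases hocc : x ∈ vars N
    · by_cases hN : N = Tm.var x
      · rw [hN]
        refine transfer (E₁ := E') ?_ (solve E')
        intro σ
        constructor
        · intro h p hp
          rcases List.mem_cons.1 hp with rfl | hp
          · rfl
          · exact h p hp
        · intro h p hp
          exact h p (List.mem_cons_of_mem _ hp)
      · left
        cases N with
        | var y =>
          simp only [vars_var, Finset.mem_singleton] at hocc
          exact absurd (by rw [hocc]) hN
        | app c Ms =>
          rintro ⟨σ, hσ⟩
          have := hσ (Tm.var x, Tm.app c Ms) (List.mem_cons_self)
          exact occurs_no_unify hocc (by simpa using this)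
    · exact elim_case hocc (solve (E'.map fun p => (subst N x p.1, subst N x p.2)))
  | (Tm.app c Ms, Tm.var x) :: E' =>
    by_cases hocc : x ∈ vars (Tm.app c Ms)
    · left
      rintro ⟨σ, hσ⟩
      have := hσ (Tm.app c Ms, Tm.var x) (List.mem_cons_self)
      exact occurs_no_unify hocc (by simpa using this.symm)
    · refine transfer ?_ (elim_case hocc
        (solve (E'.map fun p => (subst (Tm.app c Ms) x p.1, subst (Tm.app c Ms) x p.2))))
      intro σ
      constructor
      · intro h p hp
        rcases List.mem_cons.1 hp with rfl | hp
        · exact (h (Tm.var x, Tm.app c Ms) (List.mem_cons_self)).symm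
        · exact h p (List.mem_cons_of_mem _ hp)
      · intro h p hp
        rcases List.mem_cons.1 hp with rfl | hp
        · exact (h (Tm.app c Ms, Tm.var x) (List.mem_cons_self)).symm
        · exact h p (List.mem_cons_of_mem _ hp)
  | (Tm.app c Ms, Tm.app c' Ns) :: E' =>
    by_cases hcl : c = c' ∧ Ms.length = Ns.length
    · obtain ⟨hc, hlen⟩ := hcl
      rw [hc]
      refine transfer ?_ (solve (Ms.zip Ns ++ E'))
      intro σ
      constructor
      · intro h p hp
        rcases List.mem_cons.1 hp with rfl | hp
        · exact (unifies_app_iff hlen).2 fun q hq => h q (List.mem_append_left _ hq)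
        · exact h p (List.mem_append_right _ hp)
      · intro h p hp
        rcases List.mem_append.1 hp with hp | hp
        · exact (unifies_app_iff hlen).1
            (h _ (List.mem_cons_self)) p hp
        · exact h p (List.mem_cons_of_mem _ hp)
    · left
      rintro ⟨σ, hσ⟩
      have := hσ (Tm.app c Ms, Tm.app c' Ns) (List.mem_cons_self)
      simp only [applySub_app, Tm.app.injEq] at this
      obtain ⟨hc2, h2⟩ := this
      have hl : Ms.length = Ns.length := by
        have := congrArg List.length h2; simpa using this
      exact hcl ⟨hc2, hl⟩
termination_by ((varsE E).card, szE E)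
decreasing_by
  · -- drop trivial var equation
    rw [hN]
    have hsub := varsE_tail_subset (Tm.var x, Tm.var x) E'
    rcases lt_or_eq_of_le (Finset.card_le_card hsub) with h | h
    · exact Prod.Lex.left _ _ h
    · rw [h]
      refine Prod.Lex.right _ ?_
      have := sz_pos (Tm.var x)
      simp only [szE_cons]
      omega
  · -- var elimination (var on left)
    refine Prod.Lex.left _ _ (card_elim_lt hocc ?_ ?_)
    · intro z hz
      exact mem_varsE.2 ⟨(Tm.var x, N), List.mem_cons_self, Or.inr hz⟩
    · exact mem_varsE.2 ⟨(Tm.var x, N), List.mem_cons_self, Or.inl (by simp)⟩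
  · -- var elimination (var on right)
    refine Prod.Lex.left _ _ (card_elim_lt hocc ?_ ?_)
    · intro z hz
      exact mem_varsE.2 ⟨(Tm.app c Ms, Tm.var x), List.mem_cons_self, Or.inl hz⟩
    · exact mem_varsE.2 ⟨(Tm.app c Ms, Tm.var x), List.mem_cons_self, Or.inr (by simp)⟩
  · -- decomposition
    rw [hc]
    have hsub := varsE_zip_subset (c := c') (c' := c') (Ms := Ms) (Ns := Ns) (E' := E')
    rcases lt_or_eq_of_le (Finset.card_le_card hsub) with h | h
    · exact Prod.Lex.left _ _ h
    · rw [h]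
      refine Prod.Lex.right _ ?_
      have h1 := szE_zip_le Ms Ns
      have h2 := szE_append (Ms.zip Ns) E'
      simp only [szE_cons, sz_app]
      omega


/-- First-order unification is decidable and computes most general
unifiers: either there is no unifier, or there is a unifier σ through which
every unifier σ' factors as σ' = σ* ∘ σ. -/
theorem unification_mgu (M₁ M₂ : Tm) :
    (¬ ∃ σ : ℕ → Tm, applySub σ M₁ = applySub σ M₂) ∨
    ∃ σ : ℕ → Tm, applySub σ M₁ = applySub σ M₂ ∧
      ∀ σ' : ℕ → Tm, applySub σ' M₁ = applySub σ' M₂ →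
        ∃ σs : ℕ → Tm, ∀ y, σ' y = applySub σs (σ y) := by
  rcases solve [(M₁, M₂)] with H | ⟨σ, h1, h2⟩
  · left
    rintro ⟨σ, hσ⟩
    exact H ⟨σ, fun p hp => by rcases List.mem_cons.1 hp with rfl | hp; exact hσ; simp at hp⟩
  · right
    refine ⟨σ, h1 (M₁, M₂) (List.mem_cons_self), fun σ' hσ' => h2 σ' ?_⟩
    intro p hp
    rcases List.mem_cons.1 hp with rfl | hp
    · exact hσ'
    · simp at hp
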